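/- arXiv:2603.16798 — 2 statements merged into one kernel-verified Lean document; each statement's English description precedes it below -/
import Mathlib

section
/- For any ε, δ ∈ (0,1), there exists a measurable function g : ℝ → [0,∞) such that: (i) (1−ε)·φ(x−δ) ≤ g(x) ≤ φ(x−δ) for all x ∈ ℝ; (ii) ∫_ℝ g(x) dx = 1 − ε/2; and (iii) g(x) = (1−ε/2)·φ(x) for all x ∈ [−B+δ/2, B+δ/2], where B := (1/δ)·log(1 + (ε/2)/(1−ε/2)). -/
open MeasureTheory

/-- The probability density function of the standard Gaussian `N(0,1)`. -/
noncomputable def gaussPDF (x : ℝ) : ℝ := Real.exp (-x ^ 2 / 2) / Real.sqrt (2 * Real.pi)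

lemma gaussPDF_nonneg (x : ℝ) : 0 ≤ gaussPDF x :=
  div_nonneg (Real.exp_pos _).le (Real.sqrt_nonneg _)

lemma gaussPDF_even (x : ℝ) : gaussPDF (-x) = gaussPDF x := by
  simp [gaussPDF, neg_pow]

lemma continuous_gaussPDF : Continuous gaussPDF := by
  unfold gaussPDF; fun_prop

lemma integrable_gaussPDF : Integrable gaussPDF := by
  have h : Integrable (fun x : ℝ => Real.exp (-(1/2) * x ^ 2)) :=
    integrable_exp_neg_mul_sq (by norm_num)
  have h2 := h.div_const (Real.sqrt (2 * Real.pi))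
  convert h2 using 2 with x
  · unfold gaussPDF; ring_nf

lemma integral_gaussPDF : ∫ x : ℝ, gaussPDF x = 1 := by
  have h : ∫ x : ℝ, Real.exp (-(1/2) * x ^ 2) = Real.sqrt (Real.pi / (1/2)) :=
    integral_gaussian (1/2)
  have hs : (0:ℝ) < Real.sqrt (2 * Real.pi) := Real.sqrt_pos.2 (by positivity)
  have : ∫ x : ℝ, gaussPDF x = (∫ x : ℝ, Real.exp (-(1/2) * x ^ 2)) / Real.sqrt (2 * Real.pi) := by
    rw [← integral_div]
    congr 1 with x
    unfold gaussPDF; ring_nf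
  rw [this, h, show Real.pi / (1/2) = 2 * Real.pi by ring, div_self hs.ne']

lemma log_eq (ε : ℝ) (h1 : 0 < 1 - ε/2) :
    Real.log (1 + (ε / 2) / (1 - ε / 2)) = -Real.log (1 - ε/2) := by
  have h2e : (1:ℝ) - ε/2 ≠ 0 := h1.ne'
  have e1 : 1 + (ε / 2) / (1 - ε / 2) = (1 - ε/2)⁻¹ := by
    have h3 : (2:ℝ) - ε ≠ 0 := fun h => h2e (by linarith)
    rw [inv_eq_one_div, eq_div_iff h2e]
    field_simp [h3]
    ring
  rw [e1, Real.log_inv]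

lemma key (ε δ x : ℝ) (hε1 : 0 < ε) (hε2 : ε < 1) (hδ : 0 < δ)
    (hx1 : -((1 / δ) * Real.log (1 + (ε / 2) / (1 - ε / 2))) + δ / 2 ≤ x)
    (hx2 : x ≤ (1 / δ) * Real.log (1 + (ε / 2) / (1 - ε / 2)) + δ / 2) :
    (1 - ε) * gaussPDF (x - δ) ≤ (1 - ε/2) * gaussPDF x ∧
      (1 - ε/2) * gaussPDF x ≤ gaussPDF (x - δ) := by
  have h1 : (0:ℝ) < 1 - ε/2 := by linarith
  have h2 : (0:ℝ) < 1 - ε := by linarith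
  rw [log_eq ε h1] at hx1 hx2
  set L := Real.log (1 - ε/2) with hL
  -- from hx1 : -((1/δ) * -L) + δ/2 ≤ x, get L + δ^2/2 ≤ δ * x
  have hd1 : L + δ^2/2 ≤ δ * x := by
    have := mul_le_mul_of_nonneg_left hx1 hδ.le
    rw [mul_add, mul_neg, ← mul_assoc] at this
    field_simp at this
    nlinarith
  have hd2 : δ * x ≤ -L + δ^2/2 := by
    have := mul_le_mul_of_nonneg_left hx2 hδ.le
    rw [mul_add, ← mul_assoc] at this
    field_simp at this
    nlinarith
  have hs : (0:ℝ) < Real.sqrt (2 * Real.pi) := Real.sqrt_pos.2 (by positivity)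
  have hLε : Real.log (1 - ε) ≤ 2 * L := by
    rw [hL, show (2:ℝ) * Real.log (1 - ε/2) = Real.log ((1 - ε/2)^2) by
      rw [Real.log_pow]; push_cast; ring]
    exact Real.log_le_log h2 (by nlinarith)
  constructor
  · -- lower bound
    unfold gaussPDF
    rw [← mul_div_assoc, ← mul_div_assoc]
    apply div_le_div_of_nonneg_right _ hs.le
    calc (1 - ε) * Real.exp (-(x - δ) ^ 2 / 2)
        = Real.exp (Real.log (1 - ε) + -(x - δ) ^ 2 / 2) := by
          rw [Real.exp_add, Real.exp_log h2]
      _ ≤ Real.exp (L + -x ^ 2 / 2) := by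
          apply Real.exp_le_exp.2; nlinarith
      _ = (1 - ε/2) * Real.exp (-x ^ 2 / 2) := by
          rw [Real.exp_add, Real.exp_log h1]
  · unfold gaussPDF
    rw [← mul_div_assoc]
    apply div_le_div_of_nonneg_right _ hs.le
    calc (1 - ε/2) * Real.exp (-x ^ 2 / 2)
        = Real.exp (L + -x ^ 2 / 2) := by rw [Real.exp_add, Real.exp_log h1]
      _ ≤ Real.exp (-(x - δ) ^ 2 / 2) := by
          apply Real.exp_le_exp.2; nlinarith

/-- For any `ε, δ ∈ (0,1)` there is a measurable `g : ℝ → [0,∞)` with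
`(1−ε)·φ(x−δ) ≤ g(x) ≤ φ(x−δ)` everywhere, total integral `1 − ε/2`, and
`g(x) = (1−ε/2)·φ(x)` on `[−B+δ/2, B+δ/2]`, where
`B = (1/δ)·log(1 + (ε/2)/(1−ε/2))`. -/
theorem stmt1 (ε δ : ℝ) (hε : ε ∈ Set.Ioo (0 : ℝ) 1) (hδ : δ ∈ Set.Ioo (0 : ℝ) 1) :
    ∃ g : ℝ → ℝ, Measurable g ∧ (∀ x : ℝ, 0 ≤ g x) ∧
      (∀ x : ℝ, (1 - ε) * gaussPDF (x - δ) ≤ g x ∧ g x ≤ gaussPDF (x - δ)) ∧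
      (∫ x : ℝ, g x) = 1 - ε / 2 ∧
      ∀ x ∈ Set.Icc (-((1 / δ) * Real.log (1 + (ε / 2) / (1 - ε / 2))) + δ / 2)
          ((1 / δ) * Real.log (1 + (ε / 2) / (1 - ε / 2)) + δ / 2),
        g x = (1 - ε / 2) * gaussPDF x := by
  obtain ⟨hε1, hε2⟩ := hε
  obtain ⟨hδ1, hδ2⟩ := hδ
  have h1 : (0:ℝ) < 1 - ε/2 := by linarith
  set B := (1 / δ) * Real.log (1 + (ε / 2) / (1 - ε / 2)) with hB
  have hBnn : 0 ≤ B := by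
    apply mul_nonneg (by positivity)
    apply Real.log_nonneg
    have : 0 ≤ (ε / 2) / (1 - ε / 2) := by positivity
    linarith
  set a := -B + δ/2 with ha
  set b := B + δ/2 with hb
  have hab : a ≤ b := by rw [ha, hb]; linarith
  set I := Set.Icc a b with hI
  set ψ := fun x : ℝ => gaussPDF (x - δ) with hψ
  set g := fun x : ℝ => (1 - ε/2) * (ψ x + Set.indicator I (fun y => gaussPDF y - ψ y) x)
    with hg
  have hmemI : ∀ x ∈ I, g x = (1 - ε/2) * gaussPDF x := by
    intro x hx; simp only [hg, Set.indicator_of_mem hx]; ring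
  have hnot : ∀ x ∉ I, g x = (1 - ε/2) * ψ x := by
    intro x hx; simp only [hg, Set.indicator_of_notMem hx]; ring
  have hψc : Continuous ψ := continuous_gaussPDF.comp (continuous_id.sub continuous_const)
  have hψm : Measurable ψ :=
    continuous_gaussPDF.measurable.comp (measurable_id.sub measurable_const)
  have hψi : Integrable ψ := by
    simpa using integrable_gaussPDF.comp_sub_right δ
  refine ⟨g, ?_, ?_, ?_, ?_, ?_⟩
  · exact measurable_const.mul (hψm.add
      ((continuous_gaussPDF.measurable.sub hψm).indicator measurableSet_Icc))
  · intro x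
    by_cases hx : x ∈ I
    · rw [hmemI x hx]; exact mul_nonneg h1.le (gaussPDF_nonneg _)
    · rw [hnot x hx]; exact mul_nonneg h1.le (gaussPDF_nonneg _)
  · intro x
    by_cases hx : x ∈ I
    · rw [hmemI x hx]
      exact key ε δ x hε1 hε2 hδ1 hx.1 hx.2
    · rw [hnot x hx]
      constructor
      · exact mul_le_mul_of_nonneg_right (by linarith) (gaussPDF_nonneg _)
      · nlinarith [gaussPDF_nonneg (x - δ)]
  · have hψint : ∫ x : ℝ, ψ x = 1 := by
      rw [hψ]
      rw [integral_sub_right_eq_self (fun x => gaussPDF x) δ]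
      exact integral_gaussPDF
    have hindi : Integrable (Set.indicator I (fun y => gaussPDF y - ψ y)) :=
      (integrable_gaussPDF.sub hψi).indicator measurableSet_Icc
    have hI0 : ∫ x : ℝ, Set.indicator I (fun y => gaussPDF y - ψ y) x = 0 := by
      rw [integral_indicator measurableSet_Icc]
      rw [integral_Icc_eq_integral_Ioc, ← intervalIntegral.integral_of_le hab]
      have heq : ∫ x in a..b, ψ x = ∫ x in a..b, gaussPDF x := by
        rw [hψ]
        rw [intervalIntegral.integral_comp_sub_right (fun x => gaussPDF x) δ]
        have e1 : a - δ = -b := by rw [ha, hb]; ring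
        have e2 : b - δ = -a := by rw [ha, hb]; ring
        rw [e1, e2, ← intervalIntegral.integral_comp_neg (fun x => gaussPDF x)]
        exact intervalIntegral.integral_congr fun x _ => gaussPDF_even x
      rw [intervalIntegral.integral_sub (continuous_gaussPDF.intervalIntegrable a b)
        (hψc.intervalIntegrable a b),
        heq, sub_self]
    calc (∫ x : ℝ, g x)
        = (1 - ε/2) * ∫ x : ℝ, (ψ x + Set.indicator I (fun y => gaussPDF y - ψ y) x) := by
          rw [hg]; exact integral_const_mul _ _
      _ = (1 - ε/2) * ((∫ x : ℝ, ψ x) + ∫ x : ℝ, Set.indicator I (fun y => gaussPDF y - ψ y) x) := by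
          rw [integral_add hψi hindi]
      _ = 1 - ε / 2 := by rw [hψint, hI0]; ring
  · intro x hx
    exact hmemI x hx
end

section
/- Let ξ > 0, let t ∈ ℝ with t < −ξ/2, and let ε ∈ (0,1). Let F₊ and F₋ denote the cumulative distribution functions of N(ξ/2, 1) and N(−ξ/2, 1), respectively. If F₊(t) ≥ (1−ε)·F₋(t), then ξ ≤ log(1 + ε/(1−ε)) / |t|. -/
open MeasureTheory

/-- The cumulative distribution function of the standard Gaussian `N(0,1)`. -/
noncomputable def stdGaussCDF (t : ℝ) : ℝ := ∫ y in Set.Iic t, gaussPDF y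

lemma gaussPDF_pos (x : ℝ) : 0 < gaussPDF x := by
  unfold gaussPDF
  positivity

lemma stdGaussCDF_pos (t : ℝ) : 0 < stdGaussCDF t := by
  unfold stdGaussCDF
  rw [setIntegral_pos_iff_support_of_nonneg_ae
      (Filter.Eventually.of_forall fun x => (gaussPDF_pos x).le)
      (integrable_gaussPDF.integrableOn)]
  have : Function.support gaussPDF = Set.univ := by
    ext x; simp [(gaussPDF_pos x).ne']
  rw [this, Set.univ_inter]
  simp

lemma shift_eq (a ξ : ℝ) :
    stdGaussCDF (a - ξ) = ∫ y in Set.Iic a, gaussPDF (y - ξ) := by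
  unfold stdGaussCDF
  rw [← integral_indicator measurableSet_Iic, ← integral_indicator measurableSet_Iic]
  rw [← integral_sub_right_eq_self ((Set.Iic (a - ξ)).indicator gaussPDF) ξ]
  congr 1 with y
  by_cases hy : y ≤ a
  · rw [Set.indicator_of_mem (by simpa using hy),
      Set.indicator_of_mem (by simp; linarith)]
  · rw [Set.indicator_of_notMem (by simpa using hy),
      Set.indicator_of_notMem (by simp; linarith)]

/-- If the CDFs `F₊` of `N(ξ/2,1)` and `F₋` of `N(−ξ/2,1)` satisfy
`F₊(t) ≥ (1−ε)·F₋(t)` at some `t < −ξ/2`, then `ξ ≤ log(1 + ε/(1−ε))/|t|`. -/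
theorem stmt13 (ξ t ε : ℝ) (hξ : 0 < ξ) (ht : t < -ξ / 2) (hε : ε ∈ Set.Ioo (0 : ℝ) 1)
    (h : stdGaussCDF (t - ξ / 2) ≥ (1 - ε) * stdGaussCDF (t + ξ / 2)) :
    ξ ≤ Real.log (1 + ε / (1 - ε)) / |t| := by
  obtain ⟨hε0, hε1⟩ := hε
  have ht0 : t < 0 := by linarith
  have hs : t - ξ / 2 = (t + ξ / 2) - ξ := by ring
  -- key bound: stdGaussCDF (t - ξ/2) ≤ exp (ξ * t) * stdGaussCDF (t + ξ/2)
  have key : stdGaussCDF (t - ξ / 2) ≤ Real.exp (ξ * t) * stdGaussCDF (t + ξ / 2) := by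
    rw [hs, shift_eq]
    unfold stdGaussCDF
    rw [← integral_const_mul]
    apply setIntegral_mono_on
    · exact (integrable_gaussPDF.comp_sub_right ξ).integrableOn
    · exact (integrable_gaussPDF.const_mul _).integrableOn
    · exact measurableSet_Iic
    · intro y hy
      simp only [Set.mem_Iic] at hy
      unfold gaussPDF
      rw [div_le_iff₀ (by positivity)]
      have : Real.exp (ξ * t) * (Real.exp (-y ^ 2 / 2) / Real.sqrt (2 * Real.pi)) *
          Real.sqrt (2 * Real.pi) = Real.exp (ξ * t + -y ^ 2 / 2) := by
        rw [Real.exp_add]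
        field_simp
      rw [this]
      apply Real.exp_le_exp.mpr
      nlinarith [sq_nonneg (y - t - ξ/2)]
  have hpos : 0 < stdGaussCDF (t + ξ / 2) := stdGaussCDF_pos _
  have h1 : 1 - ε ≤ Real.exp (ξ * t) := by
    have := le_trans h key
    exact le_of_mul_le_mul_right this hpos
  have hlog : Real.log (1 - ε) ≤ ξ * t := by
    have := Real.log_le_log (by linarith) h1
    simpa [Real.log_exp] using this
  have hne : (1:ℝ) - ε ≠ 0 := by linarith
  have heq : 1 + ε / (1 - ε) = (1 - ε)⁻¹ := by
    field_simp
    ring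
  rw [heq, Real.log_inv, abs_of_neg ht0, le_div_iff₀ (by linarith)]
  nlinarith
end
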